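/- Let k = (k_1, …, k_g) be a tuple of positive integers and k_max = max_i k_i. Then Γ^{lin}(g, k_max·d, (k_max,…,k_max)) ⊆ Γ(g, d, k). That is, if s ∈ [0,1]^g belongs to the linear compatibility region for g POVMs in dimension k_max·d with k_max outcomes each, then for any g POVMs E^{(i)} on ℂ^d with k_i outcomes, the POVMs s_i E^{(i)} + (1-s_i)I/k_i are jointly measurable. -/

import Mathlib

open Matrix
open scoped ComplexOrder

/-- A family `E` of POVMs on `ℂ^d` (the `i`-th having `k i` outcomes) is jointly
measurable if there is a joint POVM `G` indexed by outcome tuples whose marginals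
are the `E i`. -/
def JointlyMeasurable {d g : ℕ} (k : Fin g → ℕ)
    (E : ∀ i : Fin g, Fin (k i) → Matrix (Fin d) (Fin d) ℂ) : Prop :=
  ∃ G : (∀ i : Fin g, Fin (k i)) → Matrix (Fin d) (Fin d) ℂ,
    (∀ η, (G η).PosSemidef) ∧ (∑ η, G η = 1) ∧
      ∀ (u : Fin g) (v : Fin (k u)),
        E u v = ∑ η ∈ Finset.univ.filter (fun η : ∀ i : Fin g, Fin (k i) => η u = v), G η

section Aux

set_option linter.unusedSectionVars false

variable {n : Type*} [Fintype n]

lemma psd_sum {ι : Type*} (s : Finset ι) (f : ι → Matrix n n ℂ)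
    (h : ∀ i ∈ s, (f i).PosSemidef) : (∑ i ∈ s, f i).PosSemidef :=
  Finset.sum_induction f _ (fun _ _ ha hb => ha.add hb) Matrix.PosSemidef.zero h

lemma psd_smul {M : Matrix n n ℂ} (hM : M.PosSemidef) {c : ℂ} (hc : 0 ≤ c) :
    (c • M).PosSemidef := by
  have hcr : star c = c := by
    rw [RCLike.star_def, Complex.conj_eq_iff_im]
    exact (Complex.nonneg_iff.mp hc).2.symm
  refine Matrix.posSemidef_iff_dotProduct_mulVec.mpr ⟨?_, ?_⟩
  · unfold Matrix.IsHermitian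
    rw [conjTranspose_smul, hM.1, hcr]
  · intro x
    rw [smul_mulVec, dotProduct_smul, smul_eq_mul]
    exact mul_nonneg hc (hM.dotProduct_mulVec_nonneg x)

lemma psd_blockDiagonal [DecidableEq n] {o : Type*} [Fintype o] [DecidableEq o]
    {M : o → Matrix n n ℂ} (hM : ∀ b, (M b).PosSemidef) :
    (Matrix.blockDiagonal M).PosSemidef := by
  refine Matrix.posSemidef_iff_dotProduct_mulVec.mpr ⟨?_, ?_⟩
  · unfold Matrix.IsHermitian
    rw [blockDiagonal_conjTranspose]
    exact congrArg _ (funext fun b => (hM b).1)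
  · intro x
    have : dotProduct (star x) (Matrix.blockDiagonal M *ᵥ x) =
        ∑ b, dotProduct (star fun i => x (i, b)) (M b *ᵥ fun i => x (i, b)) := by
      simp only [dotProduct, mulVec, Fintype.sum_prod_type, blockDiagonal_apply,
        Pi.star_apply, ite_mul, zero_mul, mul_ite, mul_zero]
      rw [Finset.sum_comm]
      congr 1
      funext b
      congr 1
      funext i
      simp [Finset.mul_sum, Finset.sum_comm (s := (Finset.univ : Finset n))]
    rw [this]
    exact Finset.sum_nonneg fun b _ => (hM b).dotProduct_mulVec_nonneg _

lemma sum_submatrix {α : Type*} [AddCommMonoid α] {ι m m' n' : Type*}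
    (s : Finset ι) (M : ι → Matrix n m α) (f : n' → n) (g : m' → m) :
    ∑ j ∈ s, (M j).submatrix f g = (∑ j ∈ s, M j).submatrix f g := by
  ext i l
  simp [Matrix.sum_apply]

lemma sum_extend {M : Type*} [AddCommMonoid M] {K kk : ℕ} (hkK : kk ≤ K) (f : Fin kk → M) :
    ∑ j : Fin K, (if hj : (j : ℕ) < kk then f ⟨j, hj⟩ else 0) = ∑ v : Fin kk, f v := by
  have h1 : ∑ j : Fin K, (if hj : (j : ℕ) < kk then f ⟨j, hj⟩ else 0)
      = ∑ n ∈ Finset.range K, (if hj : n < kk then f ⟨n, hj⟩ else 0) :=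
    Fin.sum_univ_eq_sum_range (fun n => if hj : n < kk then f ⟨n, hj⟩ else 0) K
  have h2 : ∑ n ∈ Finset.range kk, (if hj : n < kk then f ⟨n, hj⟩ else 0)
      = ∑ n ∈ Finset.range K, (if hj : n < kk then f ⟨n, hj⟩ else 0) :=
    Finset.sum_subset (Finset.range_subset_range.mpr hkK)
      (fun x _ hx => dif_neg (by simpa using hx))
  have h3 : ∑ v : Fin kk, f v
      = ∑ n ∈ Finset.range kk, (if hj : n < kk then f ⟨n, hj⟩ else 0) := by
    rw [← Fin.sum_univ_eq_sum_range (fun n => if hj : n < kk then f ⟨n, hj⟩ else 0) kk]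
    exact Finset.sum_congr rfl fun v _ => by simp
  rw [h1, ← h2, ← h3]

lemma one_sub_psd [DecidableEq n] {kk : ℕ} (Ei : Fin kk → Matrix n n ℂ)
    (hpsd : ∀ v, (Ei v).PosSemidef) (hsum : ∑ v, Ei v = 1) (v : Fin kk) :
    ((1 : Matrix n n ℂ) - Ei v).PosSemidef := by
  have h : (1 : Matrix n n ℂ) - Ei v = ∑ w ∈ Finset.univ.erase v, Ei w := by
    rw [← hsum, ← Finset.add_sum_erase _ _ (Finset.mem_univ v), add_sub_cancel_left]
  rw [h]
  exact psd_sum _ _ fun w _ => hpsd w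

lemma trace_submatrix_equiv {m : Type*} [Fintype m] [DecidableEq m]
    (e : m ≃ n) (M : Matrix n n ℂ) : (M.submatrix e e).trace = M.trace := by
  unfold Matrix.trace
  simp only [Matrix.diag, Matrix.submatrix_apply]
  exact Equiv.sum_comp e fun i => M i i

end Aux

/-- The reindexing equivalence between `Fin d × Fin K` and `Fin (K * d)`. -/
def eqvKD (K d : ℕ) : (Fin d × Fin K) ≃ Fin (K * d) :=
  finProdFinEquiv.trans (finCongr (Nat.mul_comm d K))

/-- The blocks of the embedded POVM element: block `0` is `Ei j` (zero-padded over
outcomes), and the other `K - 1` blocks are `((K/kk) • 1 - Ei j) / (K - 1)`. -/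
noncomputable def blkAux (K kk d : ℕ) (Ei : Fin kk → Matrix (Fin d) (Fin d) ℂ) (j : Fin K) :
    Fin K → Matrix (Fin d) (Fin d) ℂ := fun b =>
  if hj : (j : ℕ) < kk then
    if (b : ℕ) = 0 then Ei ⟨j, hj⟩
    else (((K : ℂ) - 1)⁻¹) •
      (((K : ℂ) / (kk : ℂ)) • (1 : Matrix (Fin d) (Fin d) ℂ) - Ei ⟨j, hj⟩)
  else 0

/-- The embedded POVM elements on `ℂ^{K·d}`. -/
noncomputable def bigF (K kk d : ℕ) (Ei : Fin kk → Matrix (Fin d) (Fin d) ℂ) (j : Fin K) :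
    Matrix (Fin (K * d)) (Fin (K * d)) ℂ :=
  (Matrix.blockDiagonal (blkAux K kk d Ei j)).submatrix (eqvKD K d).symm (eqvKD K d).symm

lemma blkAux_psd {K kk d : ℕ} (hkk : 0 < kk) (hkK : kk ≤ K)
    {Ei : Fin kk → Matrix (Fin d) (Fin d) ℂ}
    (hpsd : ∀ v, (Ei v).PosSemidef) (hsum : ∑ v, Ei v = 1) (j b : Fin K) :
    (blkAux K kk d Ei j b).PosSemidef := by
  have hK1 : 1 ≤ K := hkk.trans_le hkK
  unfold blkAux
  by_cases hj : (j : ℕ) < kk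
  · rw [dif_pos hj]
    by_cases hb : (b : ℕ) = 0
    · rw [if_pos hb]; exact hpsd _
    · rw [if_neg hb]
      have hc : (0 : ℂ) ≤ ((K : ℂ) - 1)⁻¹ := by
        have h1 : ((K : ℂ) - 1)⁻¹ = ((((K : ℝ) - 1)⁻¹ : ℝ) : ℂ) := by push_cast; ring
        rw [h1, Complex.zero_le_real]
        have h2 : (1 : ℝ) ≤ (K : ℝ) := by exact_mod_cast hK1
        have h3 : (0 : ℝ) ≤ (K : ℝ) - 1 := by linarith
        exact inv_nonneg.mpr h3
      apply psd_smul _ hc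
      have he : ((K : ℂ) / (kk : ℂ)) • (1 : Matrix (Fin d) (Fin d) ℂ) - Ei ⟨j, hj⟩
          = ((K : ℂ) / (kk : ℂ) - 1) • (1 : Matrix (Fin d) (Fin d) ℂ)
            + ((1 : Matrix (Fin d) (Fin d) ℂ) - Ei ⟨j, hj⟩) := by
        module
      rw [he]
      have hc2 : (0 : ℂ) ≤ (K : ℂ) / (kk : ℂ) - 1 := by
        have h1 : (K : ℂ) / (kk : ℂ) - 1 = (((K : ℝ) / (kk : ℝ) - 1 : ℝ) : ℂ) := by
          push_cast; ring
        rw [h1, Complex.zero_le_real, sub_nonneg]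
        rw [le_div_iff₀ (by exact_mod_cast hkk)]
        simpa using (Nat.cast_le (α := ℝ)).mpr hkK
      exact (psd_smul Matrix.PosSemidef.one hc2).add (one_sub_psd Ei hpsd hsum _)
  · rw [dif_neg hj]; exact Matrix.PosSemidef.zero

lemma blkAux_sum {K kk d : ℕ} (hkk : 0 < kk) (hkK : kk ≤ K)
    {Ei : Fin kk → Matrix (Fin d) (Fin d) ℂ}
    (hsum : ∑ v, Ei v = 1) (b : Fin K) :
    ∑ j : Fin K, blkAux K kk d Ei j b = 1 := by
  unfold blkAux
  by_cases hb : (b : ℕ) = 0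
  · simp only [if_pos hb]
    rw [sum_extend hkK]
    exact hsum
  · simp only [if_neg hb]
    rw [sum_extend hkK
      (f := fun v => (((K : ℂ) - 1)⁻¹) •
        (((K : ℂ) / (kk : ℂ)) • (1 : Matrix (Fin d) (Fin d) ℂ) - Ei v))]
    have hK2 : 2 ≤ K := by
      have := b.isLt
      omega
    have hne : ((K : ℂ) - 1) ≠ 0 := by
      have h1 : ((K : ℂ) - 1) = (((K : ℝ) - 1 : ℝ) : ℂ) := by push_cast; ring
      rw [h1]
      refine Complex.ofReal_ne_zero.mpr ?_
      have : (2 : ℝ) ≤ (K : ℝ) := by exact_mod_cast hK2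
      linarith
    have hkkne : ((kk : ℂ)) ≠ 0 := Nat.cast_ne_zero.mpr hkk.ne'
    rw [← Finset.smul_sum, Finset.sum_sub_distrib, hsum, Finset.sum_const,
      Finset.card_univ, Fintype.card_fin]
    have h2 : (kk : ℕ) • (((K : ℂ) / (kk : ℂ)) • (1 : Matrix (Fin d) (Fin d) ℂ))
        = (K : ℂ) • (1 : Matrix (Fin d) (Fin d) ℂ) := by
      rw [← Nat.cast_smul_eq_nsmul ℂ, smul_smul, mul_div_cancel₀ _ hkkne]
    rw [h2]
    have h3 : (K : ℂ) • (1 : Matrix (Fin d) (Fin d) ℂ) - 1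
        = ((K : ℂ) - 1) • (1 : Matrix (Fin d) (Fin d) ℂ) := by module
    rw [h3, smul_smul, inv_mul_cancel₀ hne, one_smul]

lemma blkAux_trace_lt {K kk d : ℕ} (hkk : 0 < kk) (hkK : kk ≤ K)
    {Ei : Fin kk → Matrix (Fin d) (Fin d) ℂ}
    (hsum : ∑ v, Ei v = 1) (j : Fin K) (hj : (j : ℕ) < kk) :
    ∑ b : Fin K, (blkAux K kk d Ei j b).trace = (K : ℂ) / (kk : ℂ) * (d : ℂ) := by
  have hK1 : 1 ≤ K := hkk.trans_le hkK
  have h0K : 0 < K := hkk.trans_le hkK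
  set t0 := (Ei ⟨j, hj⟩).trace with ht0
  have hb : ∀ b : Fin K, (blkAux K kk d Ei j b).trace
      = if (b : ℕ) = 0 then t0
        else ((K : ℂ) - 1)⁻¹ * (((K : ℂ) / (kk : ℂ)) * (d : ℂ) - t0) := by
    intro b
    unfold blkAux
    rw [dif_pos hj]
    by_cases hb0 : (b : ℕ) = 0
    · rw [if_pos hb0, if_pos hb0]
    · rw [if_neg hb0, if_neg hb0, trace_smul, trace_sub, trace_smul, trace_one,
        smul_eq_mul, smul_eq_mul, Fintype.card_fin]
  rw [Finset.sum_congr rfl (fun b _ => hb b)]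
  rw [← Finset.add_sum_erase _ _ (Finset.mem_univ (⟨0, h0K⟩ : Fin K))]
  have herase : ∀ b ∈ Finset.univ.erase (⟨0, h0K⟩ : Fin K),
      (if (b : ℕ) = 0 then t0
        else ((K : ℂ) - 1)⁻¹ * (((K : ℂ) / (kk : ℂ)) * (d : ℂ) - t0))
      = ((K : ℂ) - 1)⁻¹ * (((K : ℂ) / (kk : ℂ)) * (d : ℂ) - t0) := by
    intro b hbmem
    rw [if_neg]
    intro hb0
    exact (Finset.ne_of_mem_erase hbmem) (Fin.ext hb0)
  rw [Finset.sum_congr rfl herase, Finset.sum_const,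
    Finset.card_erase_of_mem (Finset.mem_univ _), Finset.card_univ, Fintype.card_fin,
    nsmul_eq_mul]
  have hcast : ((K - 1 : ℕ) : ℂ) = (K : ℂ) - 1 := by
    rw [Nat.cast_sub hK1, Nat.cast_one]
  rw [if_pos rfl, hcast]
  rcases eq_or_lt_of_le hK1 with hK1' | hK2
  · -- K = 1, so kk = 1 and Ei has a single element equal to 1
    have hkk1 : kk = 1 := le_antisymm (hK1' ▸ hkK) hkk
    subst hkk1
    have hE0 : Ei ⟨j, hj⟩ = 1 := by
      have := hsum
      rw [Fin.sum_univ_one] at this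
      have hj0 : (⟨(j : ℕ), hj⟩ : Fin 1) = 0 := Subsingleton.elim _ _
      rw [hj0]
      exact this
    rw [ht0, hE0, trace_one, Fintype.card_fin, ← hK1']
    norm_num
  · have hne : ((K : ℂ) - 1) ≠ 0 := by
      have h1 : ((K : ℂ) - 1) = (((K : ℝ) - 1 : ℝ) : ℂ) := by push_cast; ring
      rw [h1]
      refine Complex.ofReal_ne_zero.mpr ?_
      have : (1 : ℝ) < (K : ℝ) := by exact_mod_cast hK2
      linarith
    rw [← mul_assoc, mul_inv_cancel₀ hne, one_mul]
    ring

/-- `Γ^{lin}(g, k_max·d, (k_max,…,k_max)) ⊆ Γ(g, d, k)`: if `s` belongs to the linear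
compatibility region for `g` POVMs in dimension `k_max·d` with `k_max` outcomes each,
then for any `g` POVMs `E⁽ⁱ⁾` on `ℂ^d` with `kᵢ` outcomes, the noisy POVMs
`sᵢE⁽ⁱ⁾ + (1-sᵢ)I/kᵢ` are jointly measurable. -/
theorem stmt_8 {d g : ℕ} (k : Fin g → ℕ) (hk : ∀ i, 0 < k i)
    (s : Fin g → ℝ) (hs : ∀ i, s i ∈ Set.Icc (0 : ℝ) 1)
    (h : ∀ E : Fin g → Fin (Finset.univ.sup k) →
          Matrix (Fin (Finset.univ.sup k * d)) (Fin (Finset.univ.sup k * d)) ℂ,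
      (∀ i, (∀ j, (E i j).PosSemidef) ∧ ∑ j, E i j = 1) →
      JointlyMeasurable (fun _ : Fin g => Finset.univ.sup k)
        (fun i j => (s i : ℂ) • E i j
          + ((((1 - s i : ℝ)) : ℂ) * (E i j).trace / ((Finset.univ.sup k * d : ℕ) : ℂ)) • 1)) :
    ∀ E : ∀ i : Fin g, Fin (k i) → Matrix (Fin d) (Fin d) ℂ,
      (∀ i, (∀ j, (E i j).PosSemidef) ∧ ∑ j, E i j = 1) →
      JointlyMeasurable k
        (fun i j => (s i : ℂ) • E i j + (((1 - s i) / (k i) : ℝ) : ℂ) • 1) := by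
  intro E hE
  by_cases hd0 : d = 0
  · subst hd0
    refine ⟨fun _ => 1, fun _ => Matrix.PosSemidef.one, ?_, ?_⟩
    · ext i j; exact i.elim0
    · intro u v; ext i j; exact i.elim0
  by_cases hg0 : g = 0
  · subst hg0
    refine ⟨fun _ => 1, fun _ => Matrix.PosSemidef.one, ?_, fun u => u.elim0⟩
    exact Fintype.sum_unique _
  have hd : 0 < d := Nat.pos_of_ne_zero hd0
  have hg : 0 < g := Nat.pos_of_ne_zero hg0
  set K := Finset.univ.sup k with hKdef
  have hkK : ∀ i, k i ≤ K := fun i => Finset.le_sup (Finset.mem_univ i)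
  have hK : 0 < K := lt_of_lt_of_le (hk ⟨0, hg⟩) (hkK ⟨0, hg⟩)
  -- the embedded POVMs
  set F : Fin g → Fin K → Matrix (Fin (K * d)) (Fin (K * d)) ℂ :=
    fun i => bigF K (k i) d (E i) with hF
  have hFpovm : ∀ i, (∀ j, (F i j).PosSemidef) ∧ ∑ j, F i j = 1 := by
    intro i
    constructor
    · intro j
      exact (psd_blockDiagonal
        (fun b => blkAux_psd (hk i) (hkK i) (hE i).1 (hE i).2 j b)).submatrix _
    · rw [hF]
      show ∑ j, bigF K (k i) d (E i) j = 1
      unfold bigF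
      rw [sum_submatrix]
      have hbd : ∑ j : Fin K, Matrix.blockDiagonal (blkAux K (k i) d (E i) j)
          = Matrix.blockDiagonal (∑ j : Fin K, blkAux K (k i) d (E i) j) :=
        (map_sum (Matrix.blockDiagonalAddMonoidHom (Fin d) (Fin d) (Fin K) ℂ)
          (fun j => blkAux K (k i) d (E i) j) Finset.univ).symm
      have hsum1 : ∑ j : Fin K, blkAux K (k i) d (E i) j = 1 := by
        funext b
        rw [Finset.sum_apply]
        exact blkAux_sum (hk i) (hkK i) (hE i).2 b
      rw [hbd, hsum1, Matrix.blockDiagonal_one, Matrix.submatrix_one_equiv]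
  obtain ⟨Gt, hGtpsd, hGtsum, hGtmarg⟩ := h F hFpovm
  -- the compression to the first diagonal block
  set f0 : Fin d → Fin (K * d) := fun x => eqvKD K d (x, ⟨0, hK⟩) with hf0def
  have hf0 : Function.Injective f0 := by
    intro a b hab
    have := (eqvKD K d).injective hab
    exact (Prod.ext_iff.mp this).1
  have hcomp1 : (1 : Matrix (Fin (K * d)) (Fin (K * d)) ℂ).submatrix f0 f0 = 1 := by
    ext x y
    simp [Matrix.submatrix_apply, Matrix.one_apply, hf0.eq_iff]
  have hcompF : ∀ i (j : Fin K), (F i j).submatrix f0 f0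
      = if hj : (j : ℕ) < k i then E i ⟨j, hj⟩ else 0 := by
    intro i j
    ext x y
    show (Matrix.blockDiagonal (blkAux K (k i) d (E i) j))
        ((eqvKD K d).symm (f0 x)) ((eqvKD K d).symm (f0 y))
      = (if hj : (j : ℕ) < k i then E i ⟨j, hj⟩ else 0) x y
    rw [hf0def]
    simp only [Equiv.symm_apply_apply, Matrix.blockDiagonal_apply, if_pos rfl]
    unfold blkAux
    by_cases hj : (j : ℕ) < k i
    · simp [hj]
    · simp [hj]
  have htr : ∀ i (j : Fin K), (F i j).trace
      = if (j : ℕ) < k i then (K : ℂ) / ((k i) : ℂ) * (d : ℂ) else 0 := by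
    intro i j
    have h1 : (F i j).trace = ∑ b, (blkAux K (k i) d (E i) j b).trace := by
      show (bigF K (k i) d (E i) j).trace = _
      unfold bigF
      rw [trace_submatrix_equiv ((eqvKD K d).symm), Matrix.trace_blockDiagonal]
    rw [h1]
    by_cases hj : (j : ℕ) < k i
    · rw [if_pos hj]
      exact blkAux_trace_lt (hk i) (hkK i) (hE i).2 j hj
    · rw [if_neg hj]
      unfold blkAux
      simp [dif_neg hj]
  -- the outcome projection maps
  set φ : ∀ i : Fin g, Fin K → Fin (k i) :=
    fun i j => if hj : (j : ℕ) < k i then ⟨j, hj⟩ else ⟨0, hk i⟩ with hφ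
  set push : (Fin g → Fin K) → (∀ i : Fin g, Fin (k i)) :=
    fun η i => φ i (η i) with hpush
  refine ⟨fun η => ∑ η' ∈ Finset.univ.filter (fun η' => push η' = η),
      (Gt η').submatrix f0 f0, fun η => ?_, ?_, fun u v => ?_⟩
  · exact psd_sum _ _ fun η' _ => (hGtpsd η').submatrix f0
  · rw [Finset.sum_fiberwise Finset.univ push (fun η' => (Gt η').submatrix f0 f0),
      sum_submatrix, hGtsum, hcomp1]
  · -- the marginal property
    have hstep1 : ∑ η ∈ Finset.univ.filter (fun η : ∀ i : Fin g, Fin (k i) => η u = v),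
          ∑ η' ∈ Finset.univ.filter (fun η' => push η' = η), (Gt η').submatrix f0 f0
        = ∑ η' ∈ Finset.univ.filter (fun η' : Fin g → Fin K => φ u (η' u) = v),
            (Gt η').submatrix f0 f0 := by
      rw [Finset.sum_fiberwise_eq_sum_filter Finset.univ _ push
        (fun η' => (Gt η').submatrix f0 f0)]
      apply Finset.sum_congr _ (fun _ _ => rfl)
      apply Finset.filter_congr
      intro η' _
      simp [hpush]
    have hstep2 : ∑ η' ∈ Finset.univ.filter (fun η' : Fin g → Fin K => φ u (η' u) = v),
          (Gt η').submatrix f0 f0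
        = ∑ j ∈ Finset.univ.filter (fun j : Fin K => φ u j = v),
            ∑ η' ∈ Finset.univ.filter (fun η' : Fin g → Fin K => η' u = j),
              (Gt η').submatrix f0 f0 := by
      rw [Finset.sum_fiberwise_eq_sum_filter Finset.univ
        (Finset.univ.filter (fun j : Fin K => φ u j = v)) (fun η' => η' u)
        (fun η' => (Gt η').submatrix f0 f0)]
      apply Finset.sum_congr _ (fun _ _ => rfl)
      apply Finset.filter_congr
      intro η' _
      simp
    have hstep3 : ∀ j : Fin K,
        ∑ η' ∈ Finset.univ.filter (fun η' : Fin g → Fin K => η' u = j),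
          (Gt η').submatrix f0 f0
        = (s u : ℂ) • (F u j).submatrix f0 f0
          + ((((1 - s u : ℝ)) : ℂ) * (F u j).trace / ((K * d : ℕ) : ℂ)) • 1 := by
      intro j
      rw [sum_submatrix, ← hGtmarg u j, Matrix.submatrix_add, Matrix.submatrix_smul,
        Matrix.submatrix_smul]
      simp only [Pi.add_apply, Pi.smul_apply, hcomp1]
    rw [hstep1, hstep2, Finset.sum_congr rfl (fun j _ => hstep3 j)]
    have hjv : ((⟨(v : ℕ), lt_of_lt_of_le v.isLt (hkK u)⟩ : Fin K)) ∈
        Finset.univ.filter (fun j : Fin K => φ u j = v) := by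
      rw [Finset.mem_filter]
      refine ⟨Finset.mem_univ _, ?_⟩
      rw [hφ]
      simp only [dif_pos v.isLt]
    rw [Finset.sum_eq_single_of_mem _ hjv]
    · -- value at the distinguished index
      set jv : Fin K := ⟨(v : ℕ), lt_of_lt_of_le v.isLt (hkK u)⟩ with hjvdef
      have h1 : (F u jv).submatrix f0 f0 = E u v := by
        rw [hcompF u jv, dif_pos v.isLt]
      have h2 : (F u jv).trace = (K : ℂ) / ((k u) : ℂ) * (d : ℂ) := by
        rw [htr u jv, if_pos v.isLt]
      have hKne : ((K : ℂ)) ≠ 0 := Nat.cast_ne_zero.mpr hK.ne'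
      have hdne : ((d : ℂ)) ≠ 0 := Nat.cast_ne_zero.mpr hd.ne'
      have hkune : (((k u) : ℂ)) ≠ 0 := Nat.cast_ne_zero.mpr (hk u).ne'
      have hco : (((1 - s u : ℝ)) : ℂ) * ((K : ℂ) / ((k u) : ℂ) * (d : ℂ)) / ((K * d : ℕ) : ℂ)
          = (((1 - s u) / (k u) : ℝ) : ℂ) := by
        push_cast
        field_simp
      rw [h1, h2, hco]
    · -- all other indices give zero
      intro j hjmem hjne
      have hj : ¬ ((j : ℕ) < k u) := by
        intro hj
        apply hjne
        rw [Finset.mem_filter, hφ] at hjmem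
        have := hjmem.2
        simp only [dif_pos hj] at this
        have hval : (j : ℕ) = (v : ℕ) := congrArg Fin.val this
        exact Fin.ext hval
      rw [hcompF u j, dif_neg hj, htr u j, if_neg hj]
      simp
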